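/- Let v_1,...,v_d be vertices witnessing pseudodimension d of the multiball family: there exist thresholds y_1,...,y_d such that for every pair {i,j} there are t_{ij} and minimal r_{ij} with d(t_{ij},v_k) ≤ r_{ij}+δ_{y_k} for k ∈ {i,j} and d(t_{ij},v_k) > r_{ij}+δ_{y_k} otherwise. Then for distinct i,j,p, if x lies on a shortest path from t_{ij} to v_i and on a shortest path from t_{jp} to v_j (with x ≠ t_{ij}), letting r_x = r_{ij} − d(t_{ij},x) < r_{ij}, the pair (x, r_x) satisfies d(x,v_k) ≤ r_x + δ_{y_k} for k ∈ {i,j} and d(x,v_k) > r_x + δ_{y_k} for k ∉ {i,j}, contradicting minimality of r_{ij}; hence V(π(t_{ij},v_i)) ∩ V(π(t_{jp},v_j)) ⊆ {t_{ij}}. -/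
import Mathlib


/-- Claim 3 of the pseudodimension lower-bound-to-minor argument.  `d` is the
shortest-path distance of a digraph with strictly positive edge weights (so `d`
satisfies the triangle inequality, `d a a = 0`, and `d a b > 0` for `a ≠ b`).
Vertices `v 1, …, v m` and shift values `c k = δ_{y_k}` witness pseudodimension:
for the pair `{i,j}` there are `tij` and a minimal radius `rij` with
`d tij (v k) ≤ rij + c k` for `k ∈ {i,j}` and `d tij (v k) > rij + c k` otherwise,
and similarly `tjp, rjp` for the pair `{j,p}`.  Then any vertex `x` lying both on a
shortest path from `tij` to `v i` and on a shortest path from `tjp` to `v j` must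
equal `tij` (otherwise `(x, rij − d tij x)` would contradict the minimality of
`rij`). -/
theorem stmt_18 {V : Type*} {m : ℕ} (d : V → V → ℝ)
    (htri : ∀ a b c, d a c ≤ d a b + d b c)
    (hrefl : ∀ a, d a a = 0)
    (hpos : ∀ a b : V, a ≠ b → 0 < d a b)
    (v : Fin m → V) (c : Fin m → ℝ)
    (i j p : Fin m) (hij : i ≠ j) (hip : i ≠ p) (hjp : j ≠ p)
    (tij tjp : V) (rij rjp : ℝ)
    (h1 : ∀ k, (k = i ∨ k = j) → d tij (v k) ≤ rij + c k)
    (h2 : ∀ k, k ≠ i → k ≠ j → rij + c k < d tij (v k))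
    (h3 : ∀ k, (k = j ∨ k = p) → d tjp (v k) ≤ rjp + c k)
    (h4 : ∀ k, k ≠ j → k ≠ p → rjp + c k < d tjp (v k))
    (hmin : ∀ (t' : V) (r' : ℝ),
      (∀ k, (k = i ∨ k = j) → d t' (v k) ≤ r' + c k) →
      (∀ k, k ≠ i → k ≠ j → r' + c k < d t' (v k)) → rij ≤ r') :
    ∀ x : V, d tij x + d x (v i) = d tij (v i) →
      d tjp x + d x (v j) = d tjp (v j) → x = tij := by
  intro x hx1 hx2
  by_contra hx
  have hdpos : 0 < d tij x := hpos _ _ (Ne.symm hx)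
  set r' := rij - d tij x with hr'
  have hi' : d x (v i) ≤ r' + c i := by
    have := h1 i (Or.inl rfl)
    linarith
  have hji : rjp - d tjp x < r' := by
    have h4i := h4 i hij hip
    have htr := htri tjp x (v i)
    linarith
  have hj' : d x (v j) ≤ r' + c j := by
    have := h3 j (Or.inl rfl)
    linarith
  have hk' : ∀ k, k ≠ i → k ≠ j → r' + c k < d x (v k) := by
    intro k hki hkj
    have := h2 k hki hkj
    have htr := htri tij x (v k)
    linarith
  have hmin' := hmin x r' (by rintro k (rfl|rfl) <;> assumption) hk'
  linarith
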